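/- Let P be a set of n points partitioned into groups of size at most r+1, with at least ⌈n/(r+1)⌉ groups, and let Q be the multiset of upper-hull edge slopes of the groups. Suppose at most |Q|/(r+1) slopes of Q lie in the open interval (σ_{k−1}, σ_k). If P_k collects, from each group G_j, only those upper-hull vertices v of G_j whose consecutive hull edges on both sides (when they exist within the selected range) have slopes in (σ_{k−1}, σ_k), with at most one extra vertex per group, then |P_k| ≤ |Q|/(r+1) + n/(r+1) ≤ 2n/(r+1). -/

import Mathlib

/-- Balanced splitting (Lemma 3): with `m = n/(r+1)` groups, `|Q| ≤ r·n/(r+1)`, each group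
contributing at most one vertex more than its number of selected edges, and at most
`|Q|/(r+1)` edge slopes lying in the open interval, the part `P_k` has size at most
`|Q|/(r+1) + n/(r+1) ≤ 2n/(r+1)`. -/
theorem stmt9 (n r : ℕ) (hr : 1 ≤ r) (m : ℕ) (Qcard : ℕ)
    (hm : (m : ℝ) = n / (r + 1))
    (hQ : (Qcard : ℝ) ≤ r * n / (r + 1))
    (edges contrib : Fin m → ℕ)
    (hedges : (∑ j, (edges j : ℝ)) ≤ Qcard / (r + 1))
    (hcontrib : ∀ j, contrib j ≤ edges j + 1)
    (Pk : ℕ) (hPk : (Pk : ℝ) ≤ ∑ j, (contrib j : ℝ)) :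
    (Pk : ℝ) ≤ Qcard / (r + 1) + n / (r + 1) ∧
    Qcard / (r + 1) + (n : ℝ) / (r + 1) ≤ 2 * n / (r + 1) := by
  have hpos : (0 : ℝ) < (r : ℝ) + 1 := by positivity
  constructor
  · have h1 : (∑ j, (contrib j : ℝ)) ≤ (∑ j, (edges j : ℝ)) + m := by
      have : (∑ j, (contrib j : ℝ)) ≤ ∑ j : Fin m, ((edges j : ℝ) + 1) := by
        apply Finset.sum_le_sum
        intro j _
        exact_mod_cast hcontrib j
      simpa [Finset.sum_add_distrib] using this
    calc (Pk : ℝ) ≤ ∑ j, (contrib j : ℝ) := hPk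
      _ ≤ (∑ j, (edges j : ℝ)) + m := h1
      _ ≤ Qcard / (r + 1) + n / (r + 1) := by
          rw [hm]; exact add_le_add_left hedges _
  · have hQn : (Qcard : ℝ) ≤ n := by
      calc (Qcard : ℝ) ≤ r * n / (r + 1) := hQ
        _ ≤ n := by
          rw [div_le_iff₀ hpos]
          have : (0 : ℝ) ≤ (n : ℝ) := Nat.cast_nonneg n
          nlinarith
    rw [← add_div, div_le_div_iff₀ hpos hpos]
    nlinarith
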